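/- arXiv:0810.2253 — 2 statements merged into one kernel-verified Lean document; each statement's English description precedes it below -/
import Mathlib

section
/- Let p: N → M be smooth, B a diffusion operator on N with projectible symbol lying over η: T*M → TM of constant rank, and fix a diffusion operator A on M with σ^A = η. Then the map sending a smooth function f on M to B(f∘p) − (Af)∘p is a derivation from C∞(M) to C∞(N), where C∞(M) acts on C∞(N) by multiplication via f·g := (f∘p)g. -/
open scoped Manifold

/-- **The defect of a projectible-symbol operator over a reference operator is a derivation.**
Let `p : N → M` be smooth, `B` a diffusion operator on `N` whose symbol is projectible, lying
over `η : T*M → TM` of constant rank, and let `A` be a diffusion operator on `M` with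
`σ^A = η`.  Then the map `f ↦ B (f ∘ p) − (A f) ∘ p` is a derivation from `C^∞(M)` to
`C^∞(N)`, where `C^∞(M)` acts on `C^∞(N)` by multiplication via `f · g := (f ∘ p) g`. -/
theorem stmt_10
    {E : Type*} [NormedAddCommGroup E] [NormedSpace ℝ E]
    {H : Type*} [TopologicalSpace H] {I : ModelWithCorners ℝ E H}
    {M : Type*} [TopologicalSpace M] [ChartedSpace H M] [IsManifold I (⊤ : ℕ∞) M]
    {F : Type*} [NormedAddCommGroup F] [NormedSpace ℝ F]
    {H' : Type*} [TopologicalSpace H'] {J : ModelWithCorners ℝ F H'}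
    {N : Type*} [TopologicalSpace N] [ChartedSpace H' N] [IsManifold J (⊤ : ℕ∞) N]
    (p : N → M) (hp : ContMDiff J I (⊤ : ℕ∞) p)
    (A : (M → ℝ) →ₗ[ℝ] (M → ℝ)) (B : (N → ℝ) →ₗ[ℝ] (N → ℝ))
    (hA1 : A (fun _ => (1 : ℝ)) = fun _ => 0)
    (hB1 : B (fun _ => (1 : ℝ)) = fun _ => 0)
    (σB : ∀ u : N, (TangentSpace J u →L[ℝ] ℝ) →ₗ[ℝ] TangentSpace J u)
    (hσB : ∀ f g : N → ℝ, ContMDiff J 𝓘(ℝ) (⊤ : ℕ∞) f → ContMDiff J 𝓘(ℝ) (⊤ : ℕ∞) g → ∀ u : N,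
      mfderiv J 𝓘(ℝ) f u (σB u (mfderiv J 𝓘(ℝ) g u)) =
        (1 / 2 : ℝ) * (B (f * g) u - f u * B g u - g u * B f u))
    (η : ∀ x : M, (TangentSpace I x →L[ℝ] ℝ) →ₗ[ℝ] TangentSpace I x)
    (hη_pos : ∀ (x : M) (α : TangentSpace I x →L[ℝ] ℝ), 0 ≤ α (η x α))
    (hη_rank : ∃ r : ℕ, ∀ x : M, Module.finrank ℝ ↥(LinearMap.range (η x)) = r)
    -- `B` has projectible symbol lying over `η`
    (hproj : ∀ (u : N) (α : TangentSpace I (p u) →L[ℝ] ℝ),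
      mfderiv J I p u (σB u (α.comp (mfderiv J I p u))) = η (p u) α)
    -- `A` has symbol `η`
    (hσA : ∀ f g : M → ℝ, ContMDiff I 𝓘(ℝ) (⊤ : ℕ∞) f → ContMDiff I 𝓘(ℝ) (⊤ : ℕ∞) g → ∀ x : M,
      mfderiv I 𝓘(ℝ) f x (η x (mfderiv I 𝓘(ℝ) g x)) =
        (1 / 2 : ℝ) * (A (f * g) x - f x * A g x - g x * A f x)) :
    ∀ f g : M → ℝ, ContMDiff I 𝓘(ℝ) (⊤ : ℕ∞) f → ContMDiff I 𝓘(ℝ) (⊤ : ℕ∞) g → ∀ u : N,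
      (B ((f * g) ∘ p) u - A (f * g) (p u)) =
        (B (f ∘ p) u - A f (p u)) * g (p u) + f (p u) * (B (g ∘ p) u - A g (p u)) := by
  intro f g hf hg u
  have hfp : ContMDiff J 𝓘(ℝ) (⊤ : ℕ∞) (f ∘ p) := hf.comp hp
  have hgp : ContMDiff J 𝓘(ℝ) (⊤ : ℕ∞) (g ∘ p) := hg.comp hp
  have key := hσB (f ∘ p) (g ∘ p) hfp hgp u
  have hAeq := hσA f g hf hg (p u)
  have hcf : mfderiv J 𝓘(ℝ) (f ∘ p) u
      = (mfderiv I 𝓘(ℝ) f (p u)).comp (mfderiv J I p u) :=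
    mfderiv_comp (x := u) (hf.mdifferentiableAt (by simp)) (hp.mdifferentiableAt (by simp))
  have hcg : mfderiv J 𝓘(ℝ) (g ∘ p) u
      = (mfderiv I 𝓘(ℝ) g (p u)).comp (mfderiv J I p u) :=
    mfderiv_comp (x := u) (hg.mdifferentiableAt (by simp)) (hp.mdifferentiableAt (by simp))
  rw [hcf, hcg] at key
  have hpr := hproj u (mfderiv I 𝓘(ℝ) g (p u))
  have key2 : mfderiv I 𝓘(ℝ) f (p u)
      (mfderiv J I p u (σB u ((mfderiv I 𝓘(ℝ) g (p u)).comp (mfderiv J I p u))))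
      = (1 / 2 : ℝ) * (B ((f ∘ p) * (g ∘ p)) u - (f ∘ p) u * B (g ∘ p) u
          - (g ∘ p) u * B (f ∘ p) u) := key
  erw [hpr] at key2
  have hmul : (f * g) ∘ p = (f ∘ p) * (g ∘ p) := by funext x; rfl
  rw [hmul]
  rw [hAeq] at key2
  simp only [Function.comp_apply] at key2 ⊢
  have key3 : ((1/2:ℝ) * (A (f * g) (p u) - f (p u) * A g (p u) - g (p u) * A f (p u)) : ℝ)
      = (1/2:ℝ) * (B ((f ∘ p) * (g ∘ p)) u - f (p u) * B (g ∘ p) u - g (p u) * B (f ∘ p) u) :=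
    key2
  linear_combination -2 * key3
end

section
/- Let (Ω, F, (F_t), P) be a filtered probability space and (G_t) a sub-filtration of (F_t) with G = ∨_s G_s, satisfying E[A | G_s] = E[E[A | F_s] | G] for all integrable F-measurable A and all s ≥ 0. Then: (i) if (M_t) is an (F_t)-martingale, then (E[M_t | G])_t is a (G_t)-martingale; (ii) for all G-measurable integrable H, E[H | F_s] = E[H | G_s]; (iii) E[E[A | F_s] | G] = E[E[A | G] | F_s] for all integrable A. -/
open MeasureTheory
open scoped NNReal

section Aux

variable {Ω : Type*} {m0 : MeasurableSpace Ω} {μ : Measure Ω} [IsProbabilityMeasure μ]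

/-- Auxiliary: the set-integral identity needed for part (ii). -/
theorem stmt_17_aux (F G : Filtration ℝ≥0 m0)
    (hGF : ∀ t : ℝ≥0, G t ≤ F t)
    (hcond : ∀ A : Ω → ℝ, Integrable A μ → ∀ s : ℝ≥0,
      μ[A | G s] =ᵐ[μ] μ[ μ[A | F s] | ⨆ t : ℝ≥0, G t ])
    (H : Ω → ℝ) (hHi : Integrable H μ)
    (hHm : StronglyMeasurable[⨆ r : ℝ≥0, G r] H)
    (s : ℝ≥0) (B : Set Ω) (hB : MeasurableSet[F s] B) :
    ∫ x in B, (μ[H | G s]) x ∂μ = ∫ x in B, H x ∂μ := by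
  have hGinf_le : (⨆ r : ℝ≥0, (G r : MeasurableSpace Ω)) ≤ m0 := iSup_le fun r => G.le r
  have hGs_le : (G s : MeasurableSpace Ω) ≤ ⨆ r : ℝ≥0, (G r : MeasurableSpace Ω) :=
    le_iSup (fun r : ℝ≥0 => (G r : MeasurableSpace Ω)) s
  have hBm0 : MeasurableSet[m0] B := F.le s _ hB
  set χ : Ω → ℝ := B.indicator (fun _ => (1 : ℝ)) with hχ
  have hχm : StronglyMeasurable[F s] χ := stronglyMeasurable_const.indicator hB
  have hχi : Integrable χ μ := (integrable_const (1 : ℝ)).indicator hBm0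
  have hχbdd : ∀ᵐ x ∂μ, |χ x| ≤ ((1 : ℝ≥0) : ℝ) := by
    refine Filter.Eventually.of_forall fun x => ?_
    by_cases hx : x ∈ B <;> simp [hχ, Set.indicator_apply, hx]
  -- (*) : μ[χ | G s] = μ[χ | Ginf]
  have hstar : μ[χ | G s] =ᵐ[μ] μ[χ | ⨆ r : ℝ≥0, G r] := by
    refine (hcond χ hχi s).trans ?_
    rw [condExp_of_stronglyMeasurable (F.le s) hχm hχi]
  -- bounds on the conditional expectations of χ
  have hcGs : ∀ᵐ x ∂μ, |(μ[χ | G s]) x| ≤ ((1 : ℝ≥0) : ℝ) := ae_bdd_condExp_of_ae_bdd hχbdd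
  have hcGinf : ∀ᵐ x ∂μ, |(μ[χ | ⨆ r : ℝ≥0, G r]) x| ≤ ((1 : ℝ≥0) : ℝ) :=
    ae_bdd_condExp_of_ae_bdd hχbdd
  -- integrability helpers
  have hmul : ∀ f g : Ω → ℝ, AEStronglyMeasurable f μ → (∀ᵐ x ∂μ, |f x| ≤ ((1 : ℝ≥0) : ℝ)) →
      Integrable g μ → Integrable (f * g) μ := by
    intro f g hf hb hg
    exact hg.bdd_mul (c := 1) hf (by simpa [Real.norm_eq_abs] using hb)
  have hmulr : ∀ f g : Ω → ℝ, AEStronglyMeasurable f μ → (∀ᵐ x ∂μ, |f x| ≤ ((1 : ℝ≥0) : ℝ)) →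
      Integrable g μ → Integrable (g * f) μ := by
    intro f g hf hb hg
    exact (hmul f g hf hb hg).congr (Filter.Eventually.of_forall fun x => mul_comm _ _)
  have hχam : AEStronglyMeasurable χ μ := hχi.aestronglyMeasurable
  have hχsam : AEStronglyMeasurable (μ[χ | G s]) μ :=
    (stronglyMeasurable_condExp.mono (G.le s)).aestronglyMeasurable
  have hHχi : Integrable (H * χ) μ := hmulr χ H hχam hχbdd hHi
  have hhsχi : Integrable (μ[H | G s] * χ) μ := hmulr χ (μ[H | G s]) hχam hχbdd integrable_condExp
  have hχsHi : Integrable (μ[χ | G s] * H) μ := hmul (μ[χ | G s]) H hχsam hcGs hHi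
  -- pull-out identities
  have pull1 : μ[ μ[H | G s] * χ | G s] =ᵐ[μ] μ[H | G s] * μ[χ | G s] :=
    condExp_mul_of_stronglyMeasurable_left stronglyMeasurable_condExp hhsχi hχi
  have pull2 : μ[ μ[χ | G s] * H | G s] =ᵐ[μ] μ[χ | G s] * μ[H | G s] :=
    condExp_mul_of_stronglyMeasurable_left stronglyMeasurable_condExp hχsHi hHi
  have pull3 : μ[ H * χ | ⨆ r : ℝ≥0, G r] =ᵐ[μ] H * μ[χ | ⨆ r : ℝ≥0, G r] :=
    condExp_mul_of_stronglyMeasurable_left hHm hHχi hχi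
  -- indicator as multiplication
  have hind : ∀ g : Ω → ℝ, ∫ x in B, g x ∂μ = ∫ x, (g * χ) x ∂μ := by
    intro g
    rw [← integral_indicator hBm0]
    congr 1
    funext x
    by_cases hx : x ∈ B <;> simp [hχ, Set.indicator_apply, hx]
  calc ∫ x in B, (μ[H | G s]) x ∂μ
      = ∫ x, (μ[H | G s] * χ) x ∂μ := hind _
    _ = ∫ x, (μ[ μ[H | G s] * χ | G s]) x ∂μ := (integral_condExp (G.le s)).symm
    _ = ∫ x, (μ[H | G s] * μ[χ | G s]) x ∂μ := integral_congr_ae pull1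
    _ = ∫ x, (μ[χ | G s] * μ[H | G s]) x ∂μ := by
        simp only [Pi.mul_apply, mul_comm]
    _ = ∫ x, (μ[ μ[χ | G s] * H | G s]) x ∂μ := (integral_congr_ae pull2).symm
    _ = ∫ x, (μ[χ | G s] * H) x ∂μ := integral_condExp (G.le s)
    _ = ∫ x, (μ[χ | ⨆ r : ℝ≥0, G r] * H) x ∂μ :=
        integral_congr_ae (hstar.mul Filter.EventuallyEq.rfl)
    _ = ∫ x, (H * μ[χ | ⨆ r : ℝ≥0, G r]) x ∂μ := by
        simp only [Pi.mul_apply, mul_comm]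
    _ = ∫ x, (μ[ H * χ | ⨆ r : ℝ≥0, G r]) x ∂μ := (integral_congr_ae pull3).symm
    _ = ∫ x, (H * χ) x ∂μ := integral_condExp hGinf_le
    _ = ∫ x in B, H x ∂μ := (hind _).symm

end Aux

/-- **A commutation lemma for conditional expectations along a sub-filtration.**
Let `(Ω, F, (F_t), P)` be a filtered probability space and `(G_t)` a sub-filtration of
`(F_t)` with `G = ⋁_s G_s`, satisfying `E[A | G_s] = E[E[A | F_s] | G]` for all integrable
`A` and all `s ≥ 0`.  Then:
(i) if `(M_t)` is an `(F_t)`-martingale then `(E[M_t | G])_t` is a `(G_t)`-martingale;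
(ii) for all `G`-measurable integrable `H`, `E[H | F_s] = E[H | G_s]`;
(iii) `E[E[A | F_s] | G] = E[E[A | G] | F_s]` for all integrable `A`. -/
theorem stmt_17
    {Ω : Type*} {m0 : MeasurableSpace Ω} {μ : Measure Ω} [IsProbabilityMeasure μ]
    (F G : Filtration ℝ≥0 m0)
    (hGF : ∀ t : ℝ≥0, G t ≤ F t)
    (hcond : ∀ A : Ω → ℝ, Integrable A μ → ∀ s : ℝ≥0,
      μ[A | G s] =ᵐ[μ] μ[ μ[A | F s] | ⨆ t : ℝ≥0, G t ]) :
    (∀ M : ℝ≥0 → Ω → ℝ, Martingale M F μ → ∀ s t : ℝ≥0, s ≤ t →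
        μ[ μ[M t | ⨆ r : ℝ≥0, G r] | G s ] =ᵐ[μ] μ[M s | ⨆ r : ℝ≥0, G r]) ∧
    (∀ H : Ω → ℝ, Integrable H μ → StronglyMeasurable[⨆ r : ℝ≥0, G r] H →
        ∀ s : ℝ≥0, μ[H | F s] =ᵐ[μ] μ[H | G s]) ∧
    (∀ A : Ω → ℝ, Integrable A μ → ∀ s : ℝ≥0,
        μ[ μ[A | F s] | ⨆ r : ℝ≥0, G r ] =ᵐ[μ] μ[ μ[A | ⨆ r : ℝ≥0, G r] | F s ]) := by
  have hGinf_le : (⨆ r : ℝ≥0, (G r : MeasurableSpace Ω)) ≤ m0 := iSup_le fun r => G.le r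
  have hGs_le : ∀ s : ℝ≥0, (G s : MeasurableSpace Ω) ≤ ⨆ r : ℝ≥0, (G r : MeasurableSpace Ω) :=
    fun s => le_iSup (fun r : ℝ≥0 => (G r : MeasurableSpace Ω)) s
  have part2 : ∀ H : Ω → ℝ, Integrable H μ → StronglyMeasurable[⨆ r : ℝ≥0, G r] H →
      ∀ s : ℝ≥0, μ[H | F s] =ᵐ[μ] μ[H | G s] := by
    intro H hHi hHm s
    refine (ae_eq_condExp_of_forall_setIntegral_eq (F.le s) hHi
      (fun B _ _ => integrable_condExp.integrableOn)
      (fun B hB _ => stmt_17_aux F G hGF hcond H hHi hHm s B hB) ?_).symm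
    exact StronglyMeasurable.aestronglyMeasurable (stronglyMeasurable_condExp.mono (hGF s))
  refine ⟨?_, part2, ?_⟩
  · intro M hM s t hst
    calc μ[ μ[M t | ⨆ r : ℝ≥0, G r] | G s ]
        =ᵐ[μ] μ[M t | G s] := condExp_condExp_of_le (hGs_le s) hGinf_le
      _ =ᵐ[μ] μ[ μ[M t | F s] | ⨆ r : ℝ≥0, G r] := hcond (M t) (hM.integrable t) s
      _ =ᵐ[μ] μ[M s | ⨆ r : ℝ≥0, G r] := condExp_congr_ae (hM.condExp_ae_eq hst)
  · intro A hA s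
    have h1 : μ[ μ[A | F s] | ⨆ r : ℝ≥0, G r ] =ᵐ[μ] μ[A | G s] := (hcond A hA s).symm
    have h2 : μ[ μ[A | ⨆ r : ℝ≥0, G r] | F s ] =ᵐ[μ] μ[ μ[A | ⨆ r : ℝ≥0, G r] | G s ] :=
      part2 (μ[A | ⨆ r : ℝ≥0, G r]) integrable_condExp stronglyMeasurable_condExp s
    have h3 : μ[ μ[A | ⨆ r : ℝ≥0, G r] | G s ] =ᵐ[μ] μ[A | G s] :=
      condExp_condExp_of_le (hGs_le s) hGinf_le
    exact h1.trans (h2.trans h3).symm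
end
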